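/- Let m, n be positive integers and A, B, C points on T_{m,n}. Then A, B, C are NOT collinear on T_{m,n} if and only if for all integers α₁,α₂,β₁,β₂,γ₁,γ₂, the determinant det[[a₁+α₁m, b₁+β₁m, c₁+γ₁m],[a₂+α₂n, b₂+β₂n, c₂+γ₂n],[1,1,1]] is nonzero. Equivalently, A,B,C are collinear on T_{m,n} iff some choice of integer lifts of A,B,C is collinear in ℤ². -/

import Mathlib

/-- A line on the discrete torus `ZMod m × ZMod n`: the image of an integer line
`{A + k•(u,v) : k ∈ ℤ}` with `gcd(u,v) = 1`. -/
def torusLine (m n : ℕ) (L : Set (ZMod m × ZMod n)) : Prop :=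
  ∃ (A : ZMod m × ZMod n) (u v : ℤ), Int.gcd u v = 1 ∧
    L = {P | ∃ k : ℤ, P = (A.1 + ((k * u : ℤ) : ZMod m), A.2 + ((k * v : ℤ) : ZMod n))}

/-- Three points of the torus are collinear if some line contains all three. -/
def torusCollinear (m n : ℕ) (P Q R : ZMod m × ZMod n) : Prop :=
  ∃ L, torusLine m n L ∧ P ∈ L ∧ Q ∈ L ∧ R ∈ L

/-- No three (distinct) points of `S` lie on a common line. -/
def noThreeInLine (m n : ℕ) (S : Set (ZMod m × ZMod n)) : Prop :=
  ∀ P ∈ S, ∀ Q ∈ S, ∀ R ∈ S, P ≠ Q → P ≠ R → Q ≠ R → ¬ torusCollinear m n P Q R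

/-- `tau m n`: maximal number of points on the torus with no three collinear. -/
noncomputable def tau (m n : ℕ) : ℕ :=
  sSup {k | ∃ S : Finset (ZMod m × ZMod n), noThreeInLine m n ↑S ∧ S.card = k}

lemma par_aux (u v r s : ℤ) (h : Int.gcd u v = 1) (hp : u * s = v * r) :
    ∃ k : ℤ, r = k * u ∧ s = k * v := by
  have hb : (Int.gcd u v : ℤ) = u * Int.gcdA u v + v * Int.gcdB u v := Int.gcd_eq_gcd_ab u v
  rw [h] at hb
  push_cast at hb
  refine ⟨r * Int.gcdA u v + s * Int.gcdB u v, ?_, ?_⟩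
  · linear_combination r * hb - Int.gcdB u v * hp
  · linear_combination s * hb + Int.gcdA u v * hp

lemma two_pt (p q : ℤ) : ∃ u v k : ℤ, Int.gcd u v = 1 ∧ p = k * u ∧ q = k * v := by
  by_cases h : p = 0 ∧ q = 0
  · exact ⟨1, 0, 0, rfl, by simp [h.1], by simp [h.2]⟩
  · have hg : Int.gcd p q ≠ 0 := by
      rw [Ne, Int.gcd_eq_zero_iff]; tauto
    refine ⟨p / Int.gcd p q, q / Int.gcd p q, Int.gcd p q,
      Int.gcd_div_gcd_div_gcd (Nat.pos_of_ne_zero hg), ?_, ?_⟩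
    · rw [Int.mul_ediv_cancel' (Int.gcd_dvd_left p q)]
    · rw [Int.mul_ediv_cancel' (Int.gcd_dvd_right p q)]

lemma three_pt (x₁ x₂ y₁ y₂ z₁ z₂ : ℤ)
    (h : (y₁ - x₁) * (z₂ - x₂) = (z₁ - x₁) * (y₂ - x₂)) :
    ∃ u v ky kz : ℤ, Int.gcd u v = 1 ∧ y₁ = x₁ + ky * u ∧ y₂ = x₂ + ky * v ∧
      z₁ = x₁ + kz * u ∧ z₂ = x₂ + kz * v := by
  by_cases hy : y₁ = x₁ ∧ y₂ = x₂
  · obtain ⟨u, v, k, hg, hp, hq⟩ := two_pt (z₁ - x₁) (z₂ - x₂)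
    exact ⟨u, v, 0, k, hg, by simp [hy.1], by simp [hy.2], by linarith, by linarith⟩
  · obtain ⟨u, v, ky, hg, hp, hq⟩ := two_pt (y₁ - x₁) (y₂ - x₂)
    have hky : ky ≠ 0 := by
      rintro rfl
      simp only [zero_mul] at hp hq
      exact hy ⟨by linarith, by linarith⟩
    have hpar : u * (z₂ - x₂) = v * (z₁ - x₁) := by
      apply mul_left_cancel₀ hky
      linear_combination h - (z₂ - x₂) * hp + (z₁ - x₁) * hq
    obtain ⟨kz, h1, h2⟩ := par_aux u v (z₁ - x₁) (z₂ - x₂) hg hpar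
    exact ⟨u, v, ky, kz, hg, by linarith, by linarith, by linarith, by linarith⟩

lemma castZ (m : ℕ) (a t : ℤ) : ((a + t * m : ℤ) : ZMod m) = (a : ZMod m) := by
  push_cast
  simp

lemma lift_eq (m : ℕ) (a w : ℤ) (h : (a : ZMod m) = (w : ZMod m)) : ∃ t : ℤ, a + t * m = w := by
  have hmod := (ZMod.intCast_eq_intCast_iff' a w m).mp h
  obtain ⟨t, ht⟩ := Int.ModEq.dvd hmod
  exact ⟨t, by linarith⟩

theorem stmt18 (m n : ℕ) (hm : 0 < m) (hn : 0 < n)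
    (a₁ a₂ b₁ b₂ c₁ c₂ : ℤ) :
    ¬ torusCollinear m n ((a₁ : ZMod m), (a₂ : ZMod n))
        ((b₁ : ZMod m), (b₂ : ZMod n)) ((c₁ : ZMod m), (c₂ : ZMod n)) ↔
      ∀ α₁ α₂ β₁ β₂ γ₁ γ₂ : ℤ,
        (a₁ + α₁ * m) * (b₂ + β₂ * n) + (b₁ + β₁ * m) * (c₂ + γ₂ * n)
          + (c₁ + γ₁ * m) * (a₂ + α₂ * n) - (c₁ + γ₁ * m) * (b₂ + β₂ * n)
          - (a₁ + α₁ * m) * (c₂ + γ₂ * n) - (b₁ + β₁ * m) * (a₂ + α₂ * n) ≠ 0 := by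
  haveI : NeZero m := ⟨hm.ne'⟩
  haveI : NeZero n := ⟨hn.ne'⟩
  constructor
  · intro hnc α₁ α₂ β₁ β₂ γ₁ γ₂ hdet
    apply hnc
    have h : ((b₁ + β₁ * m) - (a₁ + α₁ * m)) * ((c₂ + γ₂ * n) - (a₂ + α₂ * n))
        = ((c₁ + γ₁ * m) - (a₁ + α₁ * m)) * ((b₂ + β₂ * n) - (a₂ + α₂ * n)) := by
      linear_combination hdet
    obtain ⟨u, v, ky, kz, hg, e1, e2, e3, e4⟩ := three_pt _ _ _ _ _ _ h
    refine ⟨_, ⟨(((a₁ + α₁ * m : ℤ) : ZMod m), ((a₂ + α₂ * n : ℤ) : ZMod n)), u, v, hg, rfl⟩,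
      ⟨0, ?_⟩, ⟨ky, ?_⟩, ⟨kz, ?_⟩⟩
    · refine Prod.ext ?_ ?_ <;> simp [castZ]
    · refine Prod.ext ?_ ?_
      · show (b₁ : ZMod m) = _
        rw [← Int.cast_add, ← e1, castZ]
      · show (b₂ : ZMod n) = ((a₂ + α₂ * n : ℤ) : ZMod n) + ((ky * v : ℤ) : ZMod n)
        rw [← Int.cast_add, ← e2, castZ]
    · refine Prod.ext ?_ ?_
      · show (c₁ : ZMod m) = _
        rw [← Int.cast_add, ← e3, castZ]
      · show (c₂ : ZMod n) = ((a₂ + α₂ * n : ℤ) : ZMod n) + ((kz * v : ℤ) : ZMod n)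
        rw [← Int.cast_add, ← e4, castZ]
  · rintro h ⟨L, ⟨A, u, v, hg, rfl⟩, ⟨kP, hP⟩, ⟨kQ, hQ⟩, ⟨kR, hR⟩⟩
    rw [Prod.ext_iff] at hP hQ hR
    have hA1 : (((A.1.val : ℤ)) : ZMod m) = A.1 := by push_cast; simp
    have hA2 : (((A.2.val : ℤ)) : ZMod n) = A.2 := by push_cast; simp
    obtain ⟨α₁, eα₁⟩ := lift_eq m a₁ ((A.1.val : ℤ) + kP * u) (by rw [Int.cast_add, hA1]; exact hP.1)
    obtain ⟨α₂, eα₂⟩ := lift_eq n a₂ ((A.2.val : ℤ) + kP * v) (by rw [Int.cast_add, hA2]; exact hP.2)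
    obtain ⟨β₁, eβ₁⟩ := lift_eq m b₁ ((A.1.val : ℤ) + kQ * u) (by rw [Int.cast_add, hA1]; exact hQ.1)
    obtain ⟨β₂, eβ₂⟩ := lift_eq n b₂ ((A.2.val : ℤ) + kQ * v) (by rw [Int.cast_add, hA2]; exact hQ.2)
    obtain ⟨γ₁, eγ₁⟩ := lift_eq m c₁ ((A.1.val : ℤ) + kR * u) (by rw [Int.cast_add, hA1]; exact hR.1)
    obtain ⟨γ₂, eγ₂⟩ := lift_eq n c₂ ((A.2.val : ℤ) + kR * v) (by rw [Int.cast_add, hA2]; exact hR.2)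
    exact h α₁ α₂ β₁ β₂ γ₁ γ₂ (by rw [eα₁, eα₂, eβ₁, eβ₂, eγ₁, eγ₂]; ring)
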